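/- Let {f_t : t ∈ T} be a family of functions on ℝⁿ with pointwise supremum f. Then for every t ∈ T, dom f_t* ⊆ dom f* and int(dom f_t*) ⊆ int(dom f*). If, in addition, f* is proper, f** = sup_{t∈T} f_t**, and {f_t} is an increasing family of epi-pointed functions, then ∪_{t∈T} int(dom f_t*) = int(dom f*) and ∪_{t∈T} int(epi f_t*) = int(epi f*). -/

import Mathlib

open scoped RealInnerProductSpace Pointwise
open Set Filter

noncomputable section

/-- `En n` is the Euclidean space `ℝⁿ`. -/
abbrev En (n : ℕ) := EuclideanSpace ℝ (Fin n)

/-- The epigraph of an extended-real-valued function. -/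
def epiS {n : ℕ} (g : En n → EReal) : Set (En n × ℝ) := {p | g p.1 ≤ (p.2 : EReal)}

/-- The Fenchel conjugate `g*`. -/
def conjF {n : ℕ} (g : En n → EReal) (y : En n) : EReal :=
  ⨆ x, (⟪y, x⟫ : EReal) - g x

/-- The effective domain of `g`. -/
def dm {n : ℕ} (g : En n → EReal) : Set (En n) := {x | g x < ⊤}

/-- `g` is proper: never `-∞` and not identically `+∞`. -/
def ProperF {n : ℕ} (g : En n → EReal) : Prop := (∃ x, g x < ⊤) ∧ ∀ x, ⊥ < g x

/-- The ε-subdifferential `∂_ε g(x)` (empty when `g x` is not finite). -/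
def eSub {n : ℕ} (g : En n → EReal) (ε : ℝ) (x : En n) : Set (En n) :=
  {y | ∃ r : ℝ, g x = (r : EReal) ∧ ∀ z, ((⟪y, z - x⟫ + r - ε : ℝ) : EReal) ≤ g z}

/-- The indicator function `δ_A` (0 on `A`, `+∞` outside). -/
def indE {n : ℕ} (A : Set (En n)) (x : En n) : EReal :=
  Set.indicator Aᶜ (fun _ => (⊤ : EReal)) x

/-- The ε-normal set `N^ε_A(x) = ∂_ε δ_A(x)`. -/
def eNormal {n : ℕ} (A : Set (En n)) (ε : ℝ) (x : En n) : Set (En n) :=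
  eSub (indE A) ε x

/-- `Γ₀`: proper, lower semicontinuous, convex. -/
def Gamma0 {n : ℕ} (g : En n → EReal) : Prop :=
  ProperF g ∧ LowerSemicontinuous g ∧ Convex ℝ (epiS g)

/-- Epi-pointed: `g*` is proper with nonempty interior of its domain. -/
def EpiPointed {n : ℕ} (g : En n → EReal) : Prop :=
  ProperF (conjF g) ∧ (interior (dm (conjF g))).Nonempty

/-- The closed convex hull `c̄o g`: the function whose epigraph is the closed
convex hull of `epi g`. -/
def cchF {n : ℕ} (g : En n → EReal) (x : En n) : EReal :=
  sInf ((fun r : ℝ => (r : EReal)) '' {r | (x, r) ∈ closure (convexHull ℝ (epiS g))})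

/-- The convex hull `co g`: the function whose epigraph is the convex hull of `epi g`. -/
def coF {n : ℕ} (g : En n → EReal) (x : En n) : EReal :=
  sInf ((fun r : ℝ => (r : EReal)) '' {r | (x, r) ∈ convexHull ℝ (epiS g)})

/-- Membership in the generalized simplex `Δ(T)`. -/
def inSimplex {T : Type*} (l : T →₀ ℝ) : Prop :=
  (∀ t, 0 ≤ l t ∧ l t ≤ 1) ∧ (∑ t ∈ l.support, l t) = 1

/-- Membership in `Δ^ε(T)`. -/
def inDelta {T : Type*} (ε : ℝ) (e : T →₀ ℝ) : Prop :=
  (∀ t, 0 ≤ e t ∧ e t ≤ ε) ∧ (∑ t ∈ e.support, e t) = ε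

end

open scoped Topology

section auxLemmas
variable {n : ℕ}

variable {n : ℕ}

lemma conjF_antitone {g1 g2 : En n → EReal} (h : ∀ x, g1 x ≤ g2 x) (y : En n) :
    conjF g2 y ≤ conjF g1 y :=
  iSup_mono fun x => EReal.sub_le_sub le_rfl (h x)

lemma epiS_conjF_eq (g : En n → EReal) :
    epiS (conjF g) = ⋂ x, {p : En n × ℝ | (⟪p.1, x⟫ : EReal) - g x ≤ (p.2 : EReal)} := by
  ext p
  simp only [epiS, conjF, Set.mem_setOf_eq, Set.mem_iInter, iSup_le_iff]

lemma isLinear_aux (x : En n) : IsLinearMap ℝ (fun p : En n × ℝ => ⟪p.1, x⟫ - p.2) := by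
  constructor
  · intro p q
    simp only [Prod.fst_add, Prod.snd_add, inner_add_left]
    ring
  · intro c p
    simp only [Prod.smul_fst, Prod.smul_snd, real_inner_smul_left, smul_eq_mul]
    ring

lemma slice_eq_of_coe (x : En n) (r : ℝ) :
    {p : En n × ℝ | (⟪p.1, x⟫ : EReal) - (r : EReal) ≤ (p.2 : EReal)}
      = {p : En n × ℝ | ⟪p.1, x⟫ - p.2 ≤ r} := by
  ext p
  rw [mem_setOf_eq, mem_setOf_eq, ← EReal.coe_sub, EReal.coe_le_coe_iff]
  constructor <;> intro h <;> linarith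

lemma slice_eq_of_bot (x : En n) :
    {p : En n × ℝ | (⟪p.1, x⟫ : EReal) - (⊥ : EReal) ≤ (p.2 : EReal)} = (∅ : Set (En n × ℝ)) := by
  ext p
  simp [EReal.coe_sub_bot, top_le_iff]

lemma slice_eq_of_top (x : En n) :
    {p : En n × ℝ | (⟪p.1, x⟫ : EReal) - (⊤ : EReal) ≤ (p.2 : EReal)} = univ := by
  ext p
  simp [EReal.sub_top]

lemma epiS_conjF_convex (g : En n → EReal) : Convex ℝ (epiS (conjF g)) := by
  rw [epiS_conjF_eq]
  refine convex_iInter fun x => ?_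
  induction g x using EReal.rec with
  | bot => rw [slice_eq_of_bot]; exact convex_empty
  | coe r => rw [slice_eq_of_coe]; exact convex_halfSpace_le (isLinear_aux x) r
  | top => rw [slice_eq_of_top]; exact convex_univ

lemma epiS_conjF_closed (g : En n → EReal) : IsClosed (epiS (conjF g)) := by
  rw [epiS_conjF_eq]
  refine isClosed_iInter fun x => ?_
  induction g x using EReal.rec with
  | bot => rw [slice_eq_of_bot]; exact isClosed_empty
  | coe r =>
    rw [slice_eq_of_coe]
    exact isClosed_le ((continuous_fst.inner continuous_const).sub continuous_snd)
      continuous_const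
  | top => rw [slice_eq_of_top]; exact isClosed_univ

lemma exists_coe_of_ne {c : EReal} (h1 : c < ⊤) (h2 : ⊥ < c) : ∃ r : ℝ, c = (r : EReal) := by
  induction c using EReal.rec with
  | bot => exact absurd h2 (lt_irrefl _)
  | coe r => exact ⟨r, rfl⟩
  | top => exact absurd h1 (lt_irrefl _)

lemma dm_eq_image {g : En n → EReal} (hg : ∀ x, ⊥ < g x) : dm g = Prod.fst '' epiS g := by
  ext x
  constructor
  · intro hx
    obtain ⟨r, hr⟩ := exists_coe_of_ne hx (hg x)
    exact ⟨(x, r), by simp [epiS, hr], rfl⟩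
  · rintro ⟨⟨x', r⟩, hp, rfl⟩
    exact lt_of_le_of_lt hp (EReal.coe_lt_top r)

lemma dm_convex {g : En n → EReal} (hconv : Convex ℝ (epiS g)) (hg : ∀ x, ⊥ < g x) :
    Convex ℝ (dm g) := by
  rw [dm_eq_image hg]
  exact hconv.linear_image (LinearMap.fst ℝ _ _)



variable {n : ℕ}

lemma ereal_cases (c : EReal) : c = ⊥ ∨ (∃ r : ℝ, c = (r : EReal)) ∨ c = ⊤ := by
  induction c using EReal.rec
  · exact Or.inl rfl
  · exact Or.inr (Or.inl ⟨_, rfl⟩)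
  · exact Or.inr (Or.inr rfl)

lemma phi_decomp (φ : (En n × ℝ) →L[ℝ] ℝ) (x : En n) (r : ℝ) :
    φ (x, r) = φ (x, 0) + r * φ (0, 1) := by
  have h : (x, r) = ((x, (0 : ℝ)) + r • (((0 : En n), (1 : ℝ)))) := by
    simp [Prod.ext_iff]
  rw [h, map_add, map_smul, smul_eq_mul]

lemma exists_riesz (ψ : En n →L[ℝ] ℝ) : ∃ y : En n, ∀ x, ⟪y, x⟫ = ψ x :=
  ⟨(InnerProductSpace.toDual ℝ (En n)).symm ψ, fun _ => InnerProductSpace.toDual_symm_apply⟩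

lemma slope_nonpos {s : Set (En n × ℝ)}
    (hup : ∀ (x : En n) (r r' : ℝ), (x, r) ∈ s → r ≤ r' → (x, r') ∈ s)
    {φ : (En n × ℝ) →L[ℝ] ℝ} {u : ℝ} (hu : ∀ a ∈ s, φ a < u) {a : En n × ℝ} (ha : a ∈ s) :
    φ (0, 1) ≤ 0 := by
  by_contra h
  push_neg at h
  have h1 : φ a < u := hu a ha
  set k := (u - φ a) / φ ((0 : En n), (1 : ℝ)) with hk
  have hk0 : 0 ≤ k := div_nonneg (by linarith) h.le
  have hmem : (a.1, a.2 + k) ∈ s := hup a.1 a.2 (a.2 + k) (by simpa using ha) (by linarith)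
  have h2 : φ (a.1, a.2 + k) < u := hu _ hmem
  have h3 : φ (a.1, a.2 + k) = φ a + k * φ (0, 1) := by
    conv_rhs => rw [← Prod.mk.eta (p := a)]
    rw [phi_decomp φ a.1 (a.2 + k), phi_decomp φ a.1 a.2]
    ring
  have h4 : k * φ ((0 : En n), (1 : ℝ)) = u - φ a := by
    rw [hk]; field_simp
  rw [h3, h4] at h2
  linarith

lemma exists_affine_minorant {g : En n → EReal} (hconv : Convex ℝ (epiS g))
    (hcl : IsClosed (epiS g)) (hproper : ProperF g) :
    ∃ (y : En n) (β : ℝ), ∀ p ∈ epiS g, ⟪y, p.1⟫ - p.2 ≤ β := by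
  obtain ⟨x₀, hx₀⟩ := hproper.1
  obtain ⟨r₀, hr₀⟩ := exists_coe_of_ne hx₀ (hproper.2 x₀)
  have hmem : ((x₀, r₀) : En n × ℝ) ∈ epiS g := le_of_eq hr₀
  have hnot : ((x₀, r₀ - 1) : En n × ℝ) ∉ epiS g := by
    intro h
    have h' : (r₀ : EReal) ≤ ((r₀ - 1 : ℝ) : EReal) := hr₀ ▸ h
    have := EReal.coe_le_coe_iff.1 h'
    linarith
  obtain ⟨φ, u, hu, hux⟩ := geometric_hahn_banach_closed_point hconv hcl hnot
  have hup : ∀ (x : En n) (r r' : ℝ), (x, r) ∈ epiS g → r ≤ r' → (x, r') ∈ epiS g :=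
    fun x r r' h hr => le_trans h (EReal.coe_le_coe_iff.2 hr)
  have hs₀ : φ (0, 1) ≤ 0 := slope_nonpos hup hu hmem
  have hs₀' : φ ((0 : En n), (1 : ℝ)) ≠ 0 := by
    intro h0
    have h1 : φ (x₀, r₀) < u := hu _ hmem
    have h2 : φ (x₀, r₀ - 1) = φ (x₀, r₀) := by
      rw [phi_decomp φ x₀ (r₀ - 1), phi_decomp φ x₀ r₀, h0]; ring
    rw [h2] at hux
    linarith
  have hσ : 0 < -φ ((0 : En n), (1 : ℝ)) := by
    rcases lt_or_eq_of_le hs₀ with h | h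
    · linarith
    · exact absurd h hs₀'
  set σ := -φ ((0 : En n), (1 : ℝ)) with hσdef
  obtain ⟨yφ, hyφ⟩ := exists_riesz (φ.comp (ContinuousLinearMap.inl ℝ (En n) ℝ))
  have hyφ' : ∀ x : En n, ⟪yφ, x⟫ = φ (x, 0) := fun x => hyφ x
  refine ⟨σ⁻¹ • yφ, u / σ, fun p hp => ?_⟩
  have h1 : φ p < u := hu p hp
  have h2 : φ p = ⟪yφ, p.1⟫ - p.2 * σ := by
    rw [← Prod.mk.eta (p := p), phi_decomp φ p.1 p.2, hyφ' p.1]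
    simp only [hσdef]; ring
  have h3 : ⟪yφ, p.1⟫ - p.2 * σ < u := h2 ▸ h1
  rw [real_inner_smul_left]
  rw [le_div_iff₀ hσ]
  have hexp : (σ⁻¹ * ⟪yφ, p.1⟫ - p.2) * σ = ⟪yφ, p.1⟫ - p.2 * σ := by
    field_simp
  rw [hexp]
  exact h3.le

lemma epi_subset_closure_iUnion {T : Type*} [Nonempty T] (f : T → En n → EReal)
    (hep : ∀ t, ProperF (conjF (f t)))
    (hproper : ProperF (conjF (fun x => ⨆ s, f s x)))
    (heq : ∀ x, conjF (conjF (fun x => ⨆ s, f s x)) x = ⨆ t, conjF (conjF (f t)) x)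
    (hUconv : Convex ℝ (closure (⋃ t, epiS (conjF (f t))))) :
    epiS (conjF (fun x => ⨆ s, f s x)) ⊆ closure (⋃ t, epiS (conjF (f t))) := by
  intro p hp
  by_contra hpD
  set g := conjF (fun x => ⨆ s, f s x) with hg
  set U := ⋃ t, epiS (conjF (f t)) with hU
  obtain ⟨φ, u, hu, hup⟩ := geometric_hahn_banach_closed_point hUconv isClosed_closure hpD
  -- a point of U
  obtain ⟨t₀⟩ := ‹Nonempty T›
  obtain ⟨x₁, hx₁⟩ := (hep t₀).1
  obtain ⟨ρ₁, hρ₁⟩ := exists_coe_of_ne hx₁ ((hep t₀).2 x₁)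
  have haU : ((x₁, ρ₁) : En n × ℝ) ∈ closure U :=
    subset_closure (mem_iUnion.2 ⟨t₀, le_of_eq hρ₁⟩)
  -- U and closure U are upward closed
  have hupU : ∀ (x : En n) (r r' : ℝ), (x, r) ∈ U → r ≤ r' → (x, r') ∈ U := by
    rintro x r r' hmem hle
    obtain ⟨t, ht⟩ := mem_iUnion.1 hmem
    exact mem_iUnion.2 ⟨t, le_trans ht (EReal.coe_le_coe_iff.2 hle)⟩
  have hupD : ∀ (x : En n) (r r' : ℝ), (x, r) ∈ closure U → r ≤ r' → (x, r') ∈ closure U := by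
    intro x r r' hmem hle
    have hcont : Continuous fun q : En n × ℝ => q + ((0 : En n), r' - r) := by continuity
    have hmaps : MapsTo (fun q : En n × ℝ => q + ((0 : En n), r' - r)) U U := by
      rintro ⟨qx, qr⟩ hq
      have : ((qx, qr + (r' - r)) : En n × ℝ) ∈ U := hupU qx qr _ hq (by linarith)
      simpa [Prod.ext_iff] using this
    have := map_mem_closure hcont hmem hmaps
    simpa [Prod.ext_iff, show r + (r' - r) = r' by ring] using this
  have hs₀ : φ (0, 1) ≤ 0 := slope_nonpos hupD hu haU
  -- affine minorant of g
  obtain ⟨y₁, β, hy₁⟩ := exists_affine_minorant (epiS_conjF_convex _) (epiS_conjF_closed _) hproper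
  have hincl : ∀ t, epiS (conjF (f t)) ⊆ epiS g := by
    intro t q hq
    exact le_trans (conjF_antitone (fun x => le_iSup (fun s => f s x) t) q.1) hq
  -- Riesz
  obtain ⟨yφ, hyφ⟩ := exists_riesz (φ.comp (ContinuousLinearMap.inl ℝ (En n) ℝ))
  have hyφ' : ∀ x : En n, ⟪yφ, x⟫ = φ (x, 0) := fun x => hyφ x
  set s₀ := φ ((0 : En n), (1 : ℝ)) with hs₀def
  set d := φ p - u with hddef
  have hd : 0 < d := sub_pos.2 hup
  set c := β - ⟪y₁, p.1⟫ + p.2 with hcdef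
  set ε := d / (2 * (|c| + 1)) with hεdef
  have hε : 0 < ε := div_pos hd (by positivity)
  set σ := ε - s₀ with hσdef
  have hσ : 0 < σ := by simp only [hσdef]; linarith
  set w := σ⁻¹ • (yφ + ε • y₁) with hwdef
  set γ := (u + ε * β) / σ with hγdef
  have hwx : ∀ x' : En n, ⟪w, x'⟫ = σ⁻¹ * (⟪yφ, x'⟫ + ε * ⟪y₁, x'⟫) := by
    intro x'
    rw [hwdef, real_inner_smul_left, inner_add_left, real_inner_smul_left]
  -- Claim 1
  have claim1 : ∀ t, conjF (conjF (f t)) w ≤ (γ : EReal) := by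
    intro t
    refine iSup_le fun x' => ?_
    rcases ereal_cases (conjF (f t) x') with hbot | ⟨ρ, hρ⟩ | htop
    · exact absurd (hbot ▸ (hep t).2 x') (lt_irrefl _)
    · have hmemt : ((x', ρ) : En n × ℝ) ∈ epiS (conjF (f t)) := le_of_eq hρ
      have h1 : φ (x', ρ) < u := hu _ (subset_closure (mem_iUnion.2 ⟨t, hmemt⟩))
      have h2 : ⟪y₁, x'⟫ - ρ ≤ β := hy₁ _ (hincl t hmemt)
      have h3 : ⟪yφ, x'⟫ + ρ * s₀ < u := by
        rw [hyφ' x']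
        calc φ (x', 0) + ρ * s₀ = φ (x', ρ) := (phi_decomp φ x' ρ).symm
        _ < u := h1
      rw [hρ, ← EReal.coe_sub]
      refine EReal.coe_le_coe_iff.2 ?_
      rw [hwx x', le_div_iff₀ hσ]
      have hexp : (σ⁻¹ * (⟪yφ, x'⟫ + ε * ⟪y₁, x'⟫) - ρ) * σ
          = ⟪yφ, x'⟫ + ε * ⟪y₁, x'⟫ - ρ * σ := by field_simp
      rw [hexp]
      have h4 : ε * (⟪y₁, x'⟫ - ρ) ≤ ε * β := mul_le_mul_of_nonneg_left h2 hε.le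
      have h5 : ρ * σ = ρ * ε - ρ * s₀ := by rw [hσdef]; ring
      nlinarith [h3, h4, h5]
    · rw [htop, EReal.sub_top]
      exact bot_le
  -- Claim 2
  have hφp : ⟪yφ, p.1⟫ + p.2 * s₀ = u + d := by
    rw [hyφ' p.1, hddef]
    have : φ (p.1, 0) + p.2 * s₀ = φ p := by
      rw [← Prod.mk.eta (p := p), phi_decomp φ p.1 p.2]
    rw [this]; ring
  have hεc : ε * c ≤ d / 2 := by
    have h7 : ε * (|c| + 1) = d / 2 := by
      rw [hεdef]; field_simp
    nlinarith [le_abs_self c, hε.le, abs_nonneg c]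
  have claim2 : (γ : EReal) < conjF g w := by
    have hreal : γ < ⟪w, p.1⟫ - p.2 := by
      rw [hγdef, div_lt_iff₀ hσ, hwx p.1]
      have hexp : (σ⁻¹ * (⟪yφ, p.1⟫ + ε * ⟪y₁, p.1⟫) - p.2) * σ
          = ⟪yφ, p.1⟫ + ε * ⟪y₁, p.1⟫ - p.2 * ε + p.2 * s₀ := by
        rw [hσdef]
        have hne : ε - s₀ ≠ 0 := by linarith
        field_simp
        ring
      rw [hexp]
      have hεc2 : ε * β - ε * ⟪y₁, p.1⟫ + ε * p.2 ≤ d / 2 := by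
        have : ε * c = ε * β - ε * ⟪y₁, p.1⟫ + ε * p.2 := by rw [hcdef]; ring
        linarith [hεc, this.symm.le, this.le]
      linarith [hφp, hd]
    have hterm : ((⟪w, p.1⟫ - p.2 : ℝ) : EReal) ≤ conjF g w := by
      have hle1 : ((⟪w, p.1⟫ - p.2 : ℝ) : EReal) ≤ (⟪w, p.1⟫ : EReal) - g p.1 := by
        rw [EReal.coe_sub]
        exact EReal.sub_le_sub le_rfl hp
      exact le_trans hle1 (le_iSup (fun x => (⟪w, x⟫ : EReal) - g x) p.1)
    exact lt_of_lt_of_le (EReal.coe_lt_coe_iff.2 hreal) hterm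
  have hfin : conjF g w ≤ (γ : EReal) := by
    rw [hg] at *
    rw [heq w]
    exact iSup_le claim1
  exact absurd (lt_of_lt_of_le claim2 hfin) (lt_irrefl _)


variable {V : Type*} [NormedAddCommGroup V] [NormedSpace ℝ V]

variable {V : Type*} [NormedAddCommGroup V] [NormedSpace ℝ V]

lemma convex_iUnion_directed {ι : Sort*} {C : ι → Set V} (hC : ∀ i, Convex ℝ (C i))
    (hdir : ∀ i j, ∃ k, C i ⊆ C k ∧ C j ⊆ C k) : Convex ℝ (⋃ i, C i) := by
  intro x hx y hy a b ha hb hab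
  obtain ⟨i, hi⟩ := mem_iUnion.1 hx
  obtain ⟨j, hj⟩ := mem_iUnion.1 hy
  obtain ⟨k, hik, hjk⟩ := hdir i j
  exact mem_iUnion.2 ⟨k, hC k (hik hi) (hjk hj) ha hb hab⟩

lemma interior_closure_subset_of_convex {s : Set V} (hs : Convex ℝ s)
    (hne : (interior s).Nonempty) : interior (closure s) ⊆ interior s := by
  obtain ⟨x₀, hx₀⟩ := hne
  intro y hy
  have hcont : Continuous fun δ : ℝ => y + δ • (y - x₀) := by continuity
  have h0 : y + (0 : ℝ) • (y - x₀) = y := by simp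
  have hnhds : (fun δ : ℝ => y + δ • (y - x₀)) ⁻¹' interior (closure s) ∈ 𝓝 (0 : ℝ) :=
    hcont.continuousAt.preimage_mem_nhds (isOpen_interior.mem_nhds (by rwa [h0]))
  obtain ⟨ε, hε, hball⟩ := Metric.mem_nhds_iff.1 hnhds
  set δ := ε / 2 with hδdef
  have hδ : 0 < δ := by positivity
  have hδball : δ ∈ Metric.ball (0 : ℝ) ε := by
    simp only [Metric.mem_ball, Real.dist_eq, sub_zero]
    rw [abs_of_pos hδ]; rw [hδdef]; linarith
  have hz : y + δ • (y - x₀) ∈ closure s := interior_subset (hball hδball)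
  have ha : (0 : ℝ) < δ / (1 + δ) := by positivity
  have hb : (0 : ℝ) < 1 / (1 + δ) := by positivity
  have hab : δ / (1 + δ) + 1 / (1 + δ) = 1 := by field_simp; ring
  have hcombo := hs.combo_interior_closure_mem_interior hx₀ hz ha hb.le hab
  have heq : (δ / (1 + δ)) • x₀ + (1 / (1 + δ)) • (y + δ • (y - x₀)) = y := by
    have h1δ : (1 : ℝ) + δ ≠ 0 := by positivity
    match_scalars <;> field_simp <;> ring
  rwa [heq] at hcombo

lemma exists_finset_interior_convexHull [FiniteDimensional ℝ V] (x : V) {ε : ℝ} (hε : 0 < ε) :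
    ∃ F : Finset V, ↑F ⊆ Metric.ball x ε ∧ x ∈ interior (convexHull ℝ (F : Set V)) := by
  classical
  obtain ⟨s, b, hb⟩ := AffineBasis.exists_affineBasis ℝ V V
  have hsfin : s.Finite := b.finite_set
  lift s to Finset V using hsfin
  set z := Finset.univ.centroid ℝ b with hzdef
  have hz : z ∈ interior (convexHull ℝ (Set.range b)) := b.centroid_mem_interior_convexHull
  rw [hb, Subtype.range_coe] at hz
  have hsne : (s : Set V).Nonempty := by
    rcases (s : Set V).eq_empty_or_nonempty with h | h
    · rw [h] at hz; simp at hz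
    · exact h
  have hsne' : s.Nonempty := by exact_mod_cast hsne
  set M := s.sup' hsne' (fun w => ‖w - z‖) with hMdef
  have hM0 : 0 ≤ M := by
    obtain ⟨w, hw⟩ := hsne'
    exact le_trans (norm_nonneg (w - z)) (Finset.le_sup' (fun w => ‖w - z‖) hw)
  set δ := ε / (2 * (M + 1)) with hδdef
  have hδ : 0 < δ := by positivity
  let φ : V →ᵃ[ℝ] V :=
    { toFun := fun w => x + δ • (w - z)
      linear := δ • LinearMap.id
      map_vadd' := by
        intro p v
        simp only [vadd_eq_add, LinearMap.smul_apply, LinearMap.id_coe, id_eq]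
        module }
  let h : V ≃ₜ V :=
    { toFun := fun w => x + δ • (w - z)
      invFun := fun w => z + δ⁻¹ • (w - x)
      left_inv := fun w => by
        simp only [add_sub_cancel_left, smul_smul, inv_mul_cancel₀ hδ.ne', one_smul]
        abel
      right_inv := fun w => by
        simp only [add_sub_cancel_left, smul_smul, mul_inv_cancel₀ hδ.ne', one_smul]
        abel
      continuous_toFun :=
        continuous_const.add ((continuous_id.sub continuous_const).const_smul δ)
      continuous_invFun :=
        continuous_const.add ((continuous_id.sub continuous_const).const_smul δ⁻¹) }
  refine ⟨s.image (fun w => x + δ • (w - z)), ?_, ?_⟩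
  · intro y hy
    rw [Finset.coe_image] at hy
    obtain ⟨w, hw, rfl⟩ := hy
    rw [Metric.mem_ball, dist_eq_norm, add_sub_cancel_left, norm_smul,
      Real.norm_eq_abs, abs_of_pos hδ]
    have h1 : ‖w - z‖ ≤ M := Finset.le_sup' (fun w => ‖w - z‖) (by exact_mod_cast hw)
    have h2 : δ * (M + 1) = ε / 2 := by rw [hδdef]; field_simp
    nlinarith
  · have hx' : x ∈ h '' interior (convexHull ℝ (s : Set V)) := by
      refine ⟨z, hz, ?_⟩
      show x + δ • (z - z) = x
      simp
    rw [h.image_interior] at hx'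
    have himg : h '' convexHull ℝ (s : Set V)
        = convexHull ℝ ((fun w => x + δ • (w - z)) '' (s : Set V)) := by
      have := φ.image_convexHull (s : Set V)
      exact this
    rw [himg] at hx'
    rwa [Finset.coe_image]

lemma interior_iUnion_subset_of_directed [FiniteDimensional ℝ V] {ι : Type*} {C : ι → Set V}
    (hC : ∀ i, Convex ℝ (C i)) (hdir : Directed (· ≤ ·) C) :
    interior (⋃ i, C i) ⊆ ⋃ i, interior (C i) := by
  classical
  intro x hx
  have hne : Nonempty ι := by
    by_contra hcon
    rw [not_nonempty_iff] at hcon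
    rw [iUnion_of_empty] at hx
    simp at hx
  obtain ⟨ε, hε, hball⟩ := Metric.mem_nhds_iff.1 (mem_interior_iff_mem_nhds.1 hx)
  obtain ⟨F, hF1, hF2⟩ := exists_finset_interior_convexHull x hε
  have hchoice : ∀ w : V, ∃ i, w ∈ F → w ∈ C i := by
    intro w
    by_cases hw : w ∈ F
    · obtain ⟨i, hi⟩ := mem_iUnion.1 (hball (hF1 hw))
      exact ⟨i, fun _ => hi⟩
    · exact ⟨Classical.arbitrary ι, fun hmem => absurd hmem hw⟩
  choose idx hidx using hchoice
  obtain ⟨k, hk⟩ := hdir.finset_le (F.image idx)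
  refine mem_iUnion.2 ⟨k, ?_⟩
  have hsub : (F : Set V) ⊆ C k := by
    intro w hw
    have hwF : w ∈ F := by exact_mod_cast hw
    exact hk _ (Finset.mem_image_of_mem idx hwF) (hidx w hwF)
  exact interior_mono (convexHull_min hsub (hC k)) hF2


lemma interior_epiS_nonempty {g : En n → EReal} (hproper : ProperF g)
    (hconv : Convex ℝ (epiS g)) (hne : (interior (dm g)).Nonempty) :
    (interior (epiS g)).Nonempty := by
  obtain ⟨x₀, hx₀⟩ := hne
  obtain ⟨ε, hε, hball⟩ := Metric.mem_nhds_iff.1 (mem_interior_iff_mem_nhds.1 hx₀)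
  obtain ⟨F, hF1, hF2⟩ := exists_finset_interior_convexHull x₀ hε
  have hFne : F.Nonempty := by
    rcases F.eq_empty_or_nonempty with h | h
    · rw [h] at hF2; simp at hF2
    · exact h
  set M := F.sup' hFne (fun w => (g w).toReal) with hM
  have hsub : (F : Set (En n)) ⊆ {x | g x ≤ (M : EReal)} := by
    intro w hw
    have hwF : w ∈ F := by exact_mod_cast hw
    have h1 : g w < ⊤ := hball (hF1 hw)
    have h2 : g w ≤ ((g w).toReal : EReal) :=
      le_of_eq (EReal.coe_toReal h1.ne (hproper.2 w).ne').symm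
    exact le_trans h2 (EReal.coe_le_coe_iff.2 (Finset.le_sup' (fun w => (g w).toReal) hwF))
  have hslice : Convex ℝ {x : En n | g x ≤ (M : EReal)} := by
    intro a ha b hb s t hs ht hst
    have h1 : ((a, M) : En n × ℝ) ∈ epiS g := ha
    have h2 : ((b, M) : En n × ℝ) ∈ epiS g := hb
    have h3 := hconv h1 h2 hs ht hst
    have h4 : (s • ((a, M) : En n × ℝ) + t • ((b, M) : En n × ℝ)) = (s • a + t • b, M) := by
      refine Prod.ext (by simp) ?_
      simp only [Prod.snd_add, Prod.smul_snd, smul_eq_mul]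
      linear_combination M * hst
    rw [h4] at h3
    exact h3
  have hhull : convexHull ℝ (F : Set (En n)) ⊆ {x | g x ≤ (M : EReal)} :=
    convexHull_min hsub hslice
  have hsub2 : interior (convexHull ℝ (F : Set (En n))) ×ˢ Ioi M ⊆ epiS g := by
    rintro ⟨a, r⟩ ⟨ha, hr⟩
    exact le_trans (hhull (interior_subset ha)) (EReal.coe_le_coe_iff.2 (le_of_lt hr))
  refine ⟨(x₀, M + 1), interior_maximal hsub2 (isOpen_interior.prod isOpen_Ioi) ⟨hF2, ?_⟩⟩
  simp only [mem_Ioi]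
  linarith

end auxLemmas

/-- For every `t`, `dom f_t* ⊆ dom f*` and
`int (dom f_t*) ⊆ int (dom f*)`.  If moreover `f*` is proper,
`f** = sup_t f_t**`, and the family is increasing (over a directed set) and
consists of epi-pointed functions, then `⋃_t int (dom f_t*) = int (dom f*)` and
`⋃_t int (epi f_t*) = int (epi f*)`. -/
theorem statement5 {n : ℕ} {T : Type*} [Preorder T] (f : T → En n → EReal) :
    (∀ t, dm (conjF (f t)) ⊆ dm (conjF (fun x => ⨆ s, f s x)) ∧
        interior (dm (conjF (f t))) ⊆ interior (dm (conjF (fun x => ⨆ s, f s x)))) ∧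
    ((∀ a b : T, ∃ c, a ≤ c ∧ b ≤ c) →
      (∀ ⦃s t : T⦄, s ≤ t → ∀ x, f s x ≤ f t x) →
      (∀ t, EpiPointed (f t)) →
      ProperF (conjF (fun x => ⨆ s, f s x)) →
      (∀ x, conjF (conjF (fun x => ⨆ s, f s x)) x = ⨆ t, conjF (conjF (f t)) x) →
      (⋃ t, interior (dm (conjF (f t)))) = interior (dm (conjF (fun x => ⨆ s, f s x))) ∧
      (⋃ t, interior (epiS (conjF (f t)))) = interior (epiS (conjF (fun x => ⨆ s, f s x)))) := by
  have hle : ∀ (t : T) (y : En n), conjF (fun x => ⨆ s, f s x) y ≤ conjF (f t) y :=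
    fun t y => conjF_antitone (fun x => le_iSup (fun s => f s x) t) y
  have hdm_incl : ∀ t, dm (conjF (f t)) ⊆ dm (conjF (fun x => ⨆ s, f s x)) :=
    fun t y hy => lt_of_le_of_lt (hle t y) hy
  have hepi_incl : ∀ t, epiS (conjF (f t)) ⊆ epiS (conjF (fun x => ⨆ s, f s x)) :=
    fun t q hq => le_trans (hle t q.1) hq
  constructor
  · exact fun t => ⟨hdm_incl t, interior_mono (hdm_incl t)⟩
  · intro hdir hmono hep hproper heq
    have hTne : Nonempty T := by
      by_contra h
      rw [not_nonempty_iff] at h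
      obtain ⟨y, hy⟩ := hproper.1
      have htop : conjF (fun x => ⨆ s, f s x) y = ⊤ := by
        have hsup : ∀ x : En n, (⨆ s, f s x) = (⊥ : EReal) := fun x => iSup_of_empty _
        simp only [conjF, hsup, EReal.coe_sub_bot]
        exact iSup_const
      rw [htop] at hy
      exact absurd hy (lt_irrefl _)
    have hCmono : ∀ ⦃s t : T⦄, s ≤ t → epiS (conjF (f s)) ⊆ epiS (conjF (f t)) :=
      fun s t hst q hq => le_trans (conjF_antitone (hmono hst) q.1) hq
    have hCdir : Directed (· ≤ ·) (fun t => epiS (conjF (f t))) := by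
      intro a b
      obtain ⟨c, hac, hbc⟩ := hdir a b
      exact ⟨c, hCmono hac, hCmono hbc⟩
    have hDdir : Directed (· ≤ ·) (fun t => dm (conjF (f t))) := by
      intro a b
      obtain ⟨c, hac, hbc⟩ := hdir a b
      refine ⟨c, ?_, ?_⟩ <;>
        exact fun y hy => lt_of_le_of_lt (conjF_antitone (hmono (by assumption)) y) hy
    have hUconv : Convex ℝ (⋃ t, epiS (conjF (f t))) :=
      convex_iUnion_directed (fun t => epiS_conjF_convex _) (fun i j => hCdir i j)
    have hWconv : Convex ℝ (⋃ t, dm (conjF (f t))) :=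
      convex_iUnion_directed (fun t => dm_convex (epiS_conjF_convex _) ((hep t).1.2))
        (fun i j => hDdir i j)
    have hkey : epiS (conjF (fun x => ⨆ s, f s x)) ⊆ closure (⋃ t, epiS (conjF (f t))) :=
      epi_subset_closure_iUnion f (fun t => (hep t).1) hproper heq hUconv.closure
    obtain ⟨t₀⟩ := hTne
    have hepit : (interior (epiS (conjF (f t₀)))).Nonempty :=
      interior_epiS_nonempty (hep t₀).1 (epiS_conjF_convex _) ((hep t₀).2)
    have hepiU_ne : (interior (⋃ t, epiS (conjF (f t)))).Nonempty :=
      hepit.mono (interior_mono (subset_iUnion (fun t => epiS (conjF (f t))) t₀))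
    have hWne : (interior (⋃ t, dm (conjF (f t)))).Nonempty :=
      ((hep t₀).2).mono (interior_mono (subset_iUnion (fun t => dm (conjF (f t))) t₀))
    have h1 : interior (epiS (conjF (fun x => ⨆ s, f s x)))
        ⊆ ⋃ t, interior (epiS (conjF (f t))) :=
      calc interior (epiS (conjF (fun x => ⨆ s, f s x)))
          ⊆ interior (closure (⋃ t, epiS (conjF (f t)))) := interior_mono hkey
        _ ⊆ interior (⋃ t, epiS (conjF (f t))) :=
            interior_closure_subset_of_convex hUconv hepiU_ne
        _ ⊆ ⋃ t, interior (epiS (conjF (f t))) :=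
            interior_iUnion_subset_of_directed (fun t => epiS_conjF_convex _) hCdir
    have hkey' : dm (conjF (fun x => ⨆ s, f s x)) ⊆ closure (⋃ t, dm (conjF (f t))) := by
      intro x hx
      obtain ⟨r, hr⟩ := exists_coe_of_ne hx (hproper.2 x)
      have hmem : ((x, r) : En n × ℝ) ∈ closure (⋃ t, epiS (conjF (f t))) :=
        hkey (le_of_eq hr)
      have hx' : x ∈ Prod.fst '' closure (⋃ t, epiS (conjF (f t))) := ⟨(x, r), hmem, rfl⟩
      have h2 := image_closure_subset_closure_image (f := (Prod.fst : En n × ℝ → En n))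
        continuous_fst (s := ⋃ t, epiS (conjF (f t)))
      have h3 : (Prod.fst : En n × ℝ → En n) '' (⋃ t, epiS (conjF (f t)))
          = ⋃ t, dm (conjF (f t)) := by
        rw [image_iUnion]
        exact iUnion_congr fun t => (dm_eq_image ((hep t).1.2)).symm
      rw [← h3]
      exact h2 hx'
    have h1' : interior (dm (conjF (fun x => ⨆ s, f s x)))
        ⊆ ⋃ t, interior (dm (conjF (f t))) :=
      calc interior (dm (conjF (fun x => ⨆ s, f s x)))
          ⊆ interior (closure (⋃ t, dm (conjF (f t)))) := interior_mono hkey'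
        _ ⊆ interior (⋃ t, dm (conjF (f t))) :=
            interior_closure_subset_of_convex hWconv hWne
        _ ⊆ ⋃ t, interior (dm (conjF (f t))) :=
            interior_iUnion_subset_of_directed
              (fun t => dm_convex (epiS_conjF_convex _) ((hep t).1.2)) hDdir
    exact ⟨Subset.antisymm (iUnion_subset fun t => interior_mono (hdm_incl t)) h1',
      Subset.antisymm (iUnion_subset fun t => interior_mono (hepi_incl t)) h1⟩
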